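/- For every 2-dimensional real normed space X, the Banach-Mazur distance from X to the Euclidean plane is at most √2. -/

import Mathlib

lemma bm_core (R x y : ℝ) (hR : 2 < R^2) (hR0 : 0 < R) (hx0 : 0 ≤ x) (hxR : x < R)
    (hkey : 2*(R^2-1)*y^2 ≤ R^2 - 2*x^2) :
    ∃ lam : ℝ, 0 ≤ lam ∧ lam < 1 ∧ (x - lam*R)^2 + y^2 ≤ (1-lam)^2 := by
  have hden : (0:ℝ) < R^2 - 1 := by linarith
  by_cases hcase : R * x ≤ 1
  · refine ⟨0, le_refl 0, by norm_num, ?_⟩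
    have hx2 : x^2 * R^2 ≤ 1 := by nlinarith [mul_le_mul hcase hcase (mul_nonneg hR0.le hx0) zero_le_one]
    have h2x : 2*x^2 < 1 := by nlinarith [hx2, sq_nonneg x, hR]
    nlinarith
  · push_neg at hcase
    refine ⟨(R*x - 1)/(R^2-1), le_of_lt (div_pos (by linarith) hden), ?_, ?_⟩
    · rw [div_lt_one hden]; nlinarith
    · have hkey2 : y^2 * (R^2-1) ≤ (R - x)^2 := by nlinarith [sq_nonneg (R - 2*x)]
      have e1 : x - (R*x - 1)/(R^2-1) * R = (R - x)/(R^2-1) := by field_simp; ring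
      have e2 : 1 - (R*x - 1)/(R^2-1) = R*(R - x)/(R^2-1) := by field_simp; ring
      rw [e1, e2]
      have hnum : (R - x)^2 + y^2*(R^2-1)^2 ≤ (R*(R-x))^2 := by
        nlinarith [mul_le_mul_of_nonneg_right hkey2 hden.le]
      calc ((R-x)/(R^2-1))^2 + y^2 = ((R-x)^2 + y^2*(R^2-1)^2)/(R^2-1)^2 := by
            field_simp
      _ ≤ (R*(R-x))^2/(R^2-1)^2 := by gcongr
      _ = (R*(R-x)/(R^2-1))^2 := by rw [div_pow]

lemma bm_arith (R c d : ℝ) (hR : 2 < R^2) (hR0 : 0 < R) (hcd : c^2 + d^2 ≤ 1) :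
    ∃ lam c' d' σ : ℝ, 0 ≤ lam ∧ 0 < 1 - lam ∧ (σ = 1 ∨ σ = -1) ∧
      c'^2 + d'^2 ≤ 1 ∧
      R / Real.sqrt 2 * c = lam * (σ * R) + (1-lam) * c' ∧
      R / Real.sqrt (2*(R^2-1)) * d = (1-lam) * d' := by
  have hR1 : (1:ℝ) < R^2 - 1 := by linarith
  have hs2 : (0:ℝ) < Real.sqrt 2 := by positivity
  have hs2sq : Real.sqrt 2 ^ 2 = 2 := Real.sq_sqrt (by norm_num)
  obtain ⟨a, ha⟩ : ∃ a : ℝ, a = R / Real.sqrt 2 := ⟨_, rfl⟩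
  obtain ⟨b, hb⟩ : ∃ b : ℝ, b = R / Real.sqrt (2*(R^2-1)) := ⟨_, rfl⟩
  have ha2 : a^2 * 2 = R^2 := by rw [ha, div_pow, hs2sq]; field_simp
  have hb2 : b^2 * (2*(R^2-1)) = R^2 := by
    rw [hb, div_pow, Real.sq_sqrt (by nlinarith)]; field_simp
  have ha0 : 0 < a := by rw [ha]; positivity
  have h12 : 1 < Real.sqrt 2 := by nlinarith
  have haR : a < R := by rw [ha, div_lt_iff₀ hs2]; nlinarith
  obtain ⟨σ, hσ⟩ : ∃ σ : ℝ, σ = if 0 ≤ c then (1:ℝ) else -1 := ⟨_, rfl⟩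
  have hσ1 : σ = 1 ∨ σ = -1 := by rw [hσ]; split <;> simp
  have hσ2 : σ^2 = 1 := by rcases hσ1 with h | h <;> rw [h] <;> norm_num
  obtain ⟨m, hm⟩ : ∃ m : ℝ, m = |c| := ⟨_, rfl⟩
  have hσc : σ * c = m := by
    rw [hσ, hm]; by_cases h : 0 ≤ c
    · rw [if_pos h, abs_of_nonneg h, one_mul]
    · rw [if_neg h, abs_of_neg (lt_of_not_ge h)]; ring
  have hmc : m^2 = c^2 := by rw [hm]; exact sq_abs c
  have hm0 : 0 ≤ m := hm ▸ abs_nonneg c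
  have hm1 : m ≤ 1 := by nlinarith
  obtain ⟨x, hx⟩ : ∃ x : ℝ, x = a * m := ⟨_, rfl⟩
  obtain ⟨y, hy⟩ : ∃ y : ℝ, y = b * d := ⟨_, rfl⟩
  have hx0 : 0 ≤ x := by rw [hx]; positivity
  have hxR : x < R := by rw [hx]; nlinarith
  have hkey : 2*(R^2-1)*y^2 ≤ R^2 - 2*x^2 := by
    have h1 : d^2 ≤ 1 - m^2 := by nlinarith
    have h2 : 2*(R^2-1)*y^2 = R^2 * d^2 := by
      rw [hy]
      calc 2*(R^2-1)*(b*d)^2 = (b^2*(2*(R^2-1)))*d^2 := by ring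
      _ = R^2*d^2 := by rw [hb2]
    have h3 : x^2 = a^2 * m^2 := by rw [hx]; ring
    nlinarith [sq_nonneg m]
  obtain ⟨lam, hlam0, hlam1, hlamkey⟩ := bm_core R x y hR hR0 hx0 hxR hkey
  have h1lam : 0 < 1 - lam := by linarith
  refine ⟨lam, (a*c - lam*(σ*R))/(1-lam), y/(1-lam), σ, hlam0, h1lam, hσ1, ?_, ?_, ?_⟩
  · have hsq : (a*c - lam*(σ*R))^2 = (x - lam*R)^2 := by
      rw [hx, ← hσc]
      linear_combination (lam^2*R^2 - a^2*c^2) * hσ2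
    rw [div_pow, div_pow, ← add_div, div_le_one (by positivity), hsq]
    exact hlamkey
  · rw [← ha]; field_simp; ring
  · rw [← hb, ← hy]; field_simp

set_option maxHeartbeats 2000000 in
lemma bm_key (X : Type) [NormedAddCommGroup X] [NormedSpace ℝ X]
    (f0 f1 : X →L[ℝ] ℝ) (u v : X)
    (huvS : ∀ s t : ℝ, s^2 + t^2 ≤ 1 → ‖s • u + t • v‖ ≤ 1)
    (hmax : ∀ u'' v'' : X, (∀ s t : ℝ, s^2 + t^2 ≤ 1 → ‖s • u'' + t • v''‖ ≤ 1) →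
      f0 u'' * f1 v'' - f1 u'' * f0 v'' ≤ f0 u * f1 v - f1 u * f0 v)
    (hδpos : 0 < f0 u * f1 v - f1 u * f0 v)
    (s t : ℝ) (hz : ‖s • u + t • v‖ ≤ 1) : s^2 + t^2 ≤ 2 := by
  by_contra hq
  push_neg at hq
  obtain ⟨R, hR⟩ : ∃ R : ℝ, R = Real.sqrt (s^2+t^2) := ⟨_, rfl⟩
  have hRsq : R^2 = s^2+t^2 := by rw [hR]; exact Real.sq_sqrt (by positivity)
  have hR2 : 2 < R^2 := by rw [hRsq]; exact hq
  have hRnn : 0 ≤ R := hR ▸ Real.sqrt_nonneg _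
  have hR0 : 0 < R := by nlinarith
  have hRne : R ≠ 0 := ne_of_gt hR0
  obtain ⟨u', hu'⟩ : ∃ u' : X, u' = (s/R) • u + (t/R) • v := ⟨_, rfl⟩
  obtain ⟨v', hv'⟩ : ∃ v' : X, v' = (-t/R) • u + (s/R) • v := ⟨_, rfl⟩
  have hcomb : ∀ c d : ℝ, c • u' + d • v' = ((c*s - d*t)/R) • u + ((c*t + d*s)/R) • v := by
    intro c d
    rw [hu', hv']
    match_scalars <;> field_simp <;> ring
  have hu'vS : ∀ c d : ℝ, c^2 + d^2 ≤ 1 → ‖c • u' + d • v'‖ ≤ 1 := by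
    intro c d hcd
    rw [hcomb]
    apply huvS
    have he : ((c*s - d*t)/R)^2 + ((c*t + d*s)/R)^2 = c^2+d^2 := by
      field_simp
      linear_combination (-(c^2+d^2)) * hRsq
    rw [he]; exact hcd
  have hRu' : R • u' = s • u + t • v := by
    rw [hu']
    match_scalars <;> field_simp
  have hDu' : f0 u' * f1 v' - f1 u' * f0 v' = f0 u * f1 v - f1 u * f0 v := by
    have e1 : f0 u' * f1 v' - f1 u' * f0 v'
        = ((s^2+t^2)/R^2) * (f0 u * f1 v - f1 u * f0 v) := by
      rw [hu', hv']
      simp only [map_add, map_smul, smul_eq_mul]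
      ring
    rw [e1, ← hRsq, div_self (pow_ne_zero 2 hRne), one_mul]
  have hs2sq : Real.sqrt 2 ^ 2 = 2 := Real.sq_sqrt (by norm_num)
  obtain ⟨a, ha⟩ : ∃ a : ℝ, a = R / Real.sqrt 2 := ⟨_, rfl⟩
  obtain ⟨b, hb⟩ : ∃ b : ℝ, b = R / Real.sqrt (2*(R^2-1)) := ⟨_, rfl⟩
  have ha2 : a^2 * 2 = R^2 := by rw [ha, div_pow, hs2sq, div_mul_cancel₀ _ (two_ne_zero)]
  have h2R : (2:ℝ)*(R^2-1) ≠ 0 := by nlinarith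
  have hb2 : b^2 * (2*(R^2-1)) = R^2 := by
    rw [hb, div_pow, Real.sq_sqrt (by nlinarith), div_mul_cancel₀ _ h2R]
  have ha0 : 0 < a := by rw [ha]; positivity
  have hb0 : 0 < b := by
    rw [hb]; exact div_pos hR0 (Real.sqrt_pos.mpr (by nlinarith))
  have hab : 1 < a*b := by
    have habsq : (a*b)^2 * (4*(R^2-1)) = R^4 := by
      calc (a*b)^2 * (4*(R^2-1)) = (a^2*2) * (b^2*(2*(R^2-1))) := by ring
      _ = R^2 * R^2 := by rw [ha2, hb2]
      _ = R^4 := by ring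
    have h4 : (0:ℝ) < 4*(R^2-1) := by nlinarith
    nlinarith [habsq, mul_pos (sub_pos.mpr hR2) (sub_pos.mpr hR2), mul_pos ha0 hb0, h4,
      mul_pos h4 (mul_pos ha0 hb0)]
  have hPS : ∀ c d : ℝ, c^2 + d^2 ≤ 1 → ‖c • (a • u') + d • (b • v')‖ ≤ 1 := by
    intro c d hcd
    obtain ⟨lam, c', d', σ, hl0, hl1, hσ1, hdisc, he1, he2⟩ := bm_arith R c d hR2 hR0 hcd
    rw [← ha] at he1
    rw [← hb] at he2
    have hσabs : |σ| = 1 := by rcases hσ1 with h | h <;> rw [h] <;> norm_num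
    have expand : c • (a • u') + d • (b • v')
        = (lam*σ) • (R • u') + (1-lam) • (c' • u' + d' • v') := by
      match_scalars
      · linear_combination he1
      · linear_combination he2
    rw [expand]
    calc ‖(lam*σ) • (R • u') + (1-lam) • (c' • u' + d' • v')‖
        ≤ ‖(lam*σ) • (R • u')‖ + ‖(1-lam) • (c' • u' + d' • v')‖ := norm_add_le _ _
    _ = lam * ‖R • u'‖ + (1-lam) * ‖c' • u' + d' • v'‖ := by
        rw [norm_smul (lam*σ) (R • u'), norm_smul ((1:ℝ)-lam) (c' • u' + d' • v'),
          Real.norm_eq_abs, Real.norm_eq_abs, abs_mul, hσabs,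
          abs_of_nonneg hl0, abs_of_nonneg (by linarith : (0:ℝ) ≤ 1-lam)]
        ring
    _ ≤ lam * 1 + (1-lam) * 1 := by
        apply add_le_add
        · exact mul_le_mul_of_nonneg_left (by rw [hRu']; exact hz) hl0
        · exact mul_le_mul_of_nonneg_left (hu'vS c' d' hdisc) (by linarith)
    _ = 1 := by ring
  have hle := hmax (a • u') (b • v') hPS
  simp only [map_smul, smul_eq_mul] at hle
  nlinarith [hle, hDu', hab, hδpos]

set_option maxHeartbeats 1000000 in
lemma bm_exists_equiv (X : Type) [NormedAddCommGroup X] [NormedSpace ℝ X]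
    (hdim : Module.finrank ℝ X = 2) :
    ∃ T : X ≃L[ℝ] EuclideanSpace ℝ (Fin 2),
      ‖(T : X →L[ℝ] EuclideanSpace ℝ (Fin 2))‖ ≤ Real.sqrt 2 ∧
      ‖(T.symm : EuclideanSpace ℝ (Fin 2) →L[ℝ] X)‖ ≤ 1 := by
  have hfd : FiniteDimensional ℝ X := FiniteDimensional.of_finrank_pos (by omega)
  let bX : Module.Basis (Fin 2) ℝ X := Module.finBasisOfFinrankEq ℝ X hdim
  let f0 : X →L[ℝ] ℝ := LinearMap.toContinuousLinearMap (bX.coord 0)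
  let f1 : X →L[ℝ] ℝ := LinearMap.toContinuousLinearMap (bX.coord 1)
  let D : X → X → ℝ := fun u v => f0 u * f1 v - f1 u * f0 v
  have hDsmul : ∀ (a b : ℝ) (u v : X), D (a • u) (b • v) = (a*b) * D u v := by
    intro a b u v
    simp only [D, map_smul, smul_eq_mul]; ring
  have hDcont : Continuous fun p : X × X => D p.1 p.2 := by
    exact (((f0.continuous.comp continuous_fst).mul
      (f1.continuous.comp continuous_snd)).sub
      ((f1.continuous.comp continuous_fst).mul (f0.continuous.comp continuous_snd)))
  -- the admissible set
  set S : Set (X × X) := {p | ∀ s t : ℝ, s^2 + t^2 ≤ 1 → ‖s • p.1 + t • p.2‖ ≤ 1} with hS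
  have hSclosed : IsClosed S := by
    have : S = ⋂ (s : ℝ) (t : ℝ) (_ : s^2 + t^2 ≤ 1),
        {p : X × X | ‖s • p.1 + t • p.2‖ ≤ 1} := by
      ext p; simp [hS, Set.mem_iInter]
    rw [this]
    refine isClosed_iInter fun s => isClosed_iInter fun t => isClosed_iInter fun _ => ?_
    exact isClosed_le (((continuous_fst.const_smul s).add
      (continuous_snd.const_smul t)).norm) continuous_const
  have hSbdd : S ⊆ Metric.closedBall 0 1 := by
    intro p hp
    have h1 : ‖p.1‖ ≤ 1 := by simpa using hp 1 0 (by norm_num)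
    have h2 : ‖p.2‖ ≤ 1 := by simpa using hp 0 1 (by norm_num)
    simp only [Metric.mem_closedBall, dist_zero_right]
    rw [Prod.norm_def]
    exact max_le h1 h2
  have hScompact : IsCompact S :=
    (isCompact_closedBall (0 : X × X) 1).of_isClosed_subset hSclosed hSbdd
  -- a starting point with positive determinant
  have hSne : ∃ p ∈ S, 0 < D p.1 p.2 := by
    have h0 : bX 0 ≠ 0 := bX.ne_zero 0
    have h1 : bX 1 ≠ 0 := bX.ne_zero 1
    have hn0 : (0:ℝ) < ‖bX 0‖ := norm_pos_iff.mpr h0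
    have hn1 : (0:ℝ) < ‖bX 1‖ := norm_pos_iff.mpr h1
    refine ⟨((2*‖bX 0‖)⁻¹ • bX 0, (2*‖bX 1‖)⁻¹ • bX 1), ?_, ?_⟩
    · intro s t hst
      have hs : |s| ≤ 1 := by nlinarith [sq_abs s, abs_nonneg s, sq_nonneg t]
      have ht : |t| ≤ 1 := by nlinarith [sq_abs t, abs_nonneg t, sq_nonneg s]
      have e0n : ‖(2*‖bX 0‖)⁻¹ • bX 0‖ = 1/2 := by
        rw [norm_smul, Real.norm_eq_abs, abs_of_pos (by positivity)]
        field_simp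
      have e1n : ‖(2*‖bX 1‖)⁻¹ • bX 1‖ = 1/2 := by
        rw [norm_smul, Real.norm_eq_abs, abs_of_pos (by positivity)]
        field_simp
      calc ‖s • ((2*‖bX 0‖)⁻¹ • bX 0) + t • ((2*‖bX 1‖)⁻¹ • bX 1)‖
          ≤ ‖s • ((2*‖bX 0‖)⁻¹ • bX 0)‖ + ‖t • ((2*‖bX 1‖)⁻¹ • bX 1)‖ := norm_add_le _ _
      _ = |s| * (1/2) + |t| * (1/2) := by
          rw [norm_smul, e0n, norm_smul, e1n, Real.norm_eq_abs, Real.norm_eq_abs]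
      _ ≤ 1 := by linarith
    · rw [hDsmul]
      have : D (bX 0) (bX 1) = 1 := by
        simp [D, f0, f1, Module.Basis.coord_apply, Module.Basis.repr_self]
      rw [this]
      positivity
  obtain ⟨p₀, hp₀S, hp₀D⟩ := hSne
  obtain ⟨q, hqS, hqmax⟩ := hScompact.exists_isMaxOn ⟨p₀, hp₀S⟩ hDcont.continuousOn
  obtain ⟨u, v⟩ := q
  have hδpos : 0 < D u v := lt_of_lt_of_le hp₀D (hqmax hp₀S)
  have huvS : ∀ s t : ℝ, s^2 + t^2 ≤ 1 → ‖s • u + t • v‖ ≤ 1 := hqS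
  -- the key John-type estimate
  have hkey : ∀ s t : ℝ, ‖s • u + t • v‖ ≤ 1 → s^2 + t^2 ≤ 2 := by
    intro s t hz
    refine bm_key X f0 f1 u v huvS ?_ hδpos s t hz
    intro u'' v'' hmem
    have hmem' : (u'', v'') ∈ S := by rw [hS]; exact hmem
    exact hqmax hmem'
  -- build the equivalence
  have hvne : v ≠ 0 := by
    intro h; rw [h] at hδpos; simp [D] at hδpos
  have hli : LinearIndependent ℝ ![u, v] := by
    rw [linearIndependent_fin2]
    refine ⟨by simpa using hvne, fun a hav => ?_⟩
    simp only [Matrix.cons_val_one, Matrix.head_cons, Matrix.cons_val_zero] at hav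
    rw [← hav] at hδpos
    simp only [D, map_smul, smul_eq_mul] at hδpos
    nlinarith
  let bb : Module.Basis (Fin 2) ℝ X := basisOfLinearIndependentOfCardEqFinrank hli (by simp [hdim])
  have hbb0 : bb 0 = u := by
    rw [show bb 0 = ![u,v] 0 from congrFun (coe_basisOfLinearIndependentOfCardEqFinrank hli _) 0]
    simp
  have hbb1 : bb 1 = v := by
    rw [show bb 1 = ![u,v] 1 from congrFun (coe_basisOfLinearIndependentOfCardEqFinrank hli _) 1]
    simp
  let T : X ≃L[ℝ] EuclideanSpace ℝ (Fin 2) :=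
    (bb.equivFun.toContinuousLinearEquiv).trans (EuclideanSpace.equiv (Fin 2) ℝ).symm
  have hTapp : ∀ (z : X) (i : Fin 2), T z i = bb.repr z i := by
    intro z i; rfl
  have hTsymm : ∀ w : EuclideanSpace ℝ (Fin 2), T.symm w = w 0 • u + w 1 • v := by
    intro w
    show bb.equivFun.symm (fun i => w i) = _
    rw [Module.Basis.equivFun_symm_apply, Fin.sum_univ_two, hbb0, hbb1]
  have hnormE : ∀ w : EuclideanSpace ℝ (Fin 2), ‖w‖ = Real.sqrt ((w 0)^2 + (w 1)^2) := by
    intro w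
    rw [EuclideanSpace.norm_eq, Fin.sum_univ_two, Real.norm_eq_abs, Real.norm_eq_abs,
      sq_abs, sq_abs]
  refine ⟨T, ?_, ?_⟩
  · -- ‖T‖ ≤ √2
    apply ContinuousLinearMap.opNorm_le_bound _ (Real.sqrt_nonneg 2)
    intro z
    rw [ContinuousLinearEquiv.coe_coe]
    have hz : (bb.repr z 0) • u + (bb.repr z 1) • v = z := by
      have := bb.sum_repr z
      rwa [Fin.sum_univ_two, hbb0, hbb1] at this
    have hTz : ‖T z‖ = Real.sqrt ((bb.repr z 0)^2 + (bb.repr z 1)^2) := by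
      rw [hnormE, hTapp, hTapp]
    set s := bb.repr z 0
    set t := bb.repr z 1
    rcases eq_or_lt_of_le (norm_nonneg z) with h0 | h0
    · have hz0 : z = 0 := by simpa using h0.symm
      rw [hz0]
      simp
    · have hn : (0:ℝ) < ‖z‖ := h0
      have hmem : ‖(s/‖z‖) • u + (t/‖z‖) • v‖ ≤ 1 := by
        have : (s/‖z‖) • u + (t/‖z‖) • v = (‖z‖)⁻¹ • z := by
          rw [← hz]; module
        rw [this, norm_smul]
        rw [norm_inv, norm_norm]
        rw [inv_mul_cancel₀ (ne_of_gt hn)]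
      have hsum := hkey _ _ hmem
      have hst : s^2 + t^2 ≤ 2 * ‖z‖^2 := by
        have e : (s/‖z‖)^2 + (t/‖z‖)^2 = (s^2+t^2)/‖z‖^2 := by
          field_simp
        rw [e, div_le_iff₀ (by positivity)] at hsum
        linarith
      rw [hTz]
      calc Real.sqrt (s^2+t^2) ≤ Real.sqrt (2*‖z‖^2) := Real.sqrt_le_sqrt hst
      _ = Real.sqrt 2 * ‖z‖ := by
          rw [Real.sqrt_mul (by norm_num), Real.sqrt_sq hn.le]
  · -- ‖T.symm‖ ≤ 1
    apply ContinuousLinearMap.opNorm_le_bound _ zero_le_one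
    intro w
    rw [ContinuousLinearEquiv.coe_coe, one_mul, hTsymm]
    rcases eq_or_lt_of_le (norm_nonneg w) with h0 | h0
    · have hw0 : w = 0 := by simpa using h0.symm
      rw [hw0]
      simp
    · have hn : (0:ℝ) < ‖w‖ := h0
      have hsum : (w 0/‖w‖)^2 + (w 1/‖w‖)^2 ≤ 1 := by
        have hw2 : ‖w‖^2 = (w 0)^2 + (w 1)^2 := by
          rw [hnormE, Real.sq_sqrt (by positivity)]
        rw [div_pow, div_pow, ← add_div, hw2, div_self (by rw [← hw2]; exact pow_ne_zero 2 (ne_of_gt hn))]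
      have hmem := huvS _ _ hsum
      have : w 0 • u + w 1 • v = ‖w‖ • ((w 0/‖w‖) • u + (w 1/‖w‖) • v) := by
        rw [smul_add, smul_smul, smul_smul, mul_div_cancel₀ _ (ne_of_gt hn),
          mul_div_cancel₀ _ (ne_of_gt hn)]
      rw [this, norm_smul, norm_norm]
      calc ‖w‖ * ‖(w 0/‖w‖) • u + (w 1/‖w‖) • v‖ ≤ ‖w‖ * 1 :=
        mul_le_mul_of_nonneg_left hmem hn.le
      _ = ‖w‖ := mul_one _

/-- Every 2-dimensional real normed space is at Banach-Mazur distance at most `√2`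
from the Euclidean plane. -/
theorem bm_dist_le_sqrt_two (X : Type) [NormedAddCommGroup X] [NormedSpace ℝ X]
    (hdim : Module.finrank ℝ X = 2) :
    sInf {d : ℝ | ∃ T : X ≃L[ℝ] EuclideanSpace ℝ (Fin 2),
        d = ‖(T : X →L[ℝ] EuclideanSpace ℝ (Fin 2))‖ *
            ‖(T.symm : EuclideanSpace ℝ (Fin 2) →L[ℝ] X)‖} ≤ Real.sqrt 2 := by
  obtain ⟨T, hT, hTs⟩ := bm_exists_equiv X hdim
  have hbdd : BddBelow {d : ℝ | ∃ T : X ≃L[ℝ] EuclideanSpace ℝ (Fin 2),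
      d = ‖(T : X →L[ℝ] EuclideanSpace ℝ (Fin 2))‖ *
          ‖(T.symm : EuclideanSpace ℝ (Fin 2) →L[ℝ] X)‖} := by
    refine ⟨0, fun d hd => ?_⟩
    obtain ⟨T', rfl⟩ := hd
    positivity
  have hmem : ‖(T : X →L[ℝ] EuclideanSpace ℝ (Fin 2))‖ *
      ‖(T.symm : EuclideanSpace ℝ (Fin 2) →L[ℝ] X)‖ ∈ {d : ℝ | ∃ T : X ≃L[ℝ] EuclideanSpace ℝ (Fin 2),
        d = ‖(T : X →L[ℝ] EuclideanSpace ℝ (Fin 2))‖ *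
            ‖(T.symm : EuclideanSpace ℝ (Fin 2) →L[ℝ] X)‖} := ⟨T, rfl⟩
  refine (csInf_le hbdd hmem).trans ?_
  calc ‖(T : X →L[ℝ] EuclideanSpace ℝ (Fin 2))‖ *
      ‖(T.symm : EuclideanSpace ℝ (Fin 2) →L[ℝ] X)‖
      ≤ Real.sqrt 2 * 1 := mul_le_mul hT hTs (norm_nonneg _) (Real.sqrt_nonneg 2)
  _ = Real.sqrt 2 := mul_one _
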